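/- In any graph obtained by the inductive blowup-labeling process, the set of vertices with strictly negative labels induces a connected subgraph. -/

import Mathlib

/-- Labeled trees built by the blowup process: start from a single vertex
labeled `-2`; either attach a new leaf `w` to `v` with label `a(v)+1`, or
subdivide an edge `{u,v}` by a new vertex `w` with label `a(u)+a(v)`. -/
inductive Blowup : Finset ℕ → (ℕ → ℕ → Prop) → (ℕ → ℤ) → Prop
  | base (v : ℕ) : Blowup {v} (fun _ _ => False) (fun _ => -2)
  | leaf {V : Finset ℕ} {adj : ℕ → ℕ → Prop} {lab : ℕ → ℤ} (v w : ℕ)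
      (hv : v ∈ V) (hw : w ∉ V) (h : Blowup V adj lab) :
      Blowup (insert w V)
        (fun x y => adj x y ∨ (x = v ∧ y = w) ∨ (x = w ∧ y = v))
        (Function.update lab w (lab v + 1))
  | subdiv {V : Finset ℕ} {adj : ℕ → ℕ → Prop} {lab : ℕ → ℤ} (u v w : ℕ)
      (hu : u ∈ V) (hv : v ∈ V) (huv : adj u v) (hw : w ∉ V)
      (h : Blowup V adj lab) :
      Blowup (insert w V)
        (fun x y => (adj x y ∧ ¬((x = u ∧ y = v) ∨ (x = v ∧ y = u))) ∨
          (x = u ∧ y = w) ∨ (x = w ∧ y = u) ∨ (x = v ∧ y = w) ∨ (x = w ∧ y = v))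
        (Function.update lab w (lab u + lab v))

theorem negative_part_connected {V : Finset ℕ} {adj : ℕ → ℕ → Prop} {lab : ℕ → ℤ}
    (h : Blowup V adj lab) :
    ∀ x y, x ∈ V → y ∈ V → lab x < 0 → lab y < 0 →
      Relation.ReflTransGen (fun a b => a ∈ V ∧ b ∈ V ∧ adj a b ∧ lab a < 0 ∧ lab b < 0) x y := by
  induction h with
  | base v =>
    intro x y hx hy _ _
    simp only [Finset.mem_singleton] at hx hy
    subst hx; subst hy
    exact Relation.ReflTransGen.refl
  | @leaf V adj lab v w hv hw h ih =>
    intro x y hx hy hxneg hyneg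
    have hne : ∀ a, a ∈ V → a ≠ w := fun a ha he => hw (he ▸ ha)
    have hlab : ∀ a, a ∈ V → Function.update lab w (lab v + 1) a = lab a :=
      fun a ha => Function.update_of_ne (hne a ha) _ _
    have lift : ∀ a b, (a ∈ V ∧ b ∈ V ∧ adj a b ∧ lab a < 0 ∧ lab b < 0) →
        (a ∈ insert w V ∧ b ∈ insert w V ∧
          (adj a b ∨ (a = v ∧ b = w) ∨ (a = w ∧ b = v)) ∧
          Function.update lab w (lab v + 1) a < 0 ∧
          Function.update lab w (lab v + 1) b < 0) := by
      rintro a b ⟨ha, hb, hab, hna, hnb⟩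
      exact ⟨Finset.mem_insert_of_mem ha, Finset.mem_insert_of_mem hb, Or.inl hab,
        by rw [hlab a ha]; exact hna, by rw [hlab b hb]; exact hnb⟩
    rcases Finset.mem_insert.mp hx with hxw | hxV
    · rcases Finset.mem_insert.mp hy with hyw | hyV
      · subst hxw; subst hyw; exact Relation.ReflTransGen.refl
      · subst hxw
        have hvneg : lab v < 0 := by
          rw [Function.update_self] at hxneg; omega
        have hyneg' : lab y < 0 := by rw [hlab y hyV] at hyneg; exact hyneg
        refine Relation.ReflTransGen.head
          ⟨Finset.mem_insert_self _ _, Finset.mem_insert_of_mem hv,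
            Or.inr (Or.inr ⟨rfl, rfl⟩), hxneg, by rw [hlab v hv]; exact hvneg⟩ ?_
        exact Relation.ReflTransGen.mono (fun a b => lift a b) _ _ (ih v y hv hyV hvneg hyneg')
    · have hxneg' : lab x < 0 := by rw [hlab x hxV] at hxneg; exact hxneg
      rcases Finset.mem_insert.mp hy with hyw | hyV
      · subst hyw
        have hvneg : lab v < 0 := by
          rw [Function.update_self] at hyneg; omega
        refine Relation.ReflTransGen.tail
          (Relation.ReflTransGen.mono (fun a b => lift a b) _ _ (ih x v hxV hv hxneg' hvneg)) ?_
        exact ⟨Finset.mem_insert_of_mem hv, Finset.mem_insert_self _ _,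
          Or.inr (Or.inl ⟨rfl, rfl⟩), by rw [hlab v hv]; exact hvneg, hyneg⟩
      · have hyneg' : lab y < 0 := by rw [hlab y hyV] at hyneg; exact hyneg
        exact Relation.ReflTransGen.mono (fun a b => lift a b) _ _ (ih x y hxV hyV hxneg' hyneg')
  | @subdiv V adj lab u v w hu hv huv hw h ih =>
    intro x y hx hy hxneg hyneg
    have hne : ∀ a, a ∈ V → a ≠ w := fun a ha he => hw (he ▸ ha)
    have hlab : ∀ a, a ∈ V → Function.update lab w (lab u + lab v) a = lab a :=
      fun a ha => Function.update_of_ne (hne a ha) _ _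
    set R' := fun a b => a ∈ insert w V ∧ b ∈ insert w V ∧
        ((adj a b ∧ ¬((a = u ∧ b = v) ∨ (a = v ∧ b = u))) ∨
          (a = u ∧ b = w) ∨ (a = w ∧ b = u) ∨ (a = v ∧ b = w) ∨ (a = w ∧ b = v)) ∧
        Function.update lab w (lab u + lab v) a < 0 ∧
        Function.update lab w (lab u + lab v) b < 0 with hR'
    have hwmem : w ∈ insert w V := Finset.mem_insert_self _ _
    have lift : ∀ a b, (a ∈ V ∧ b ∈ V ∧ adj a b ∧ lab a < 0 ∧ lab b < 0) →
        Relation.ReflTransGen R' a b := by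
      rintro a b ⟨ha, hb, hab, hna, hnb⟩
      by_cases hcase : (a = u ∧ b = v) ∨ (a = v ∧ b = u)
      · have hwneg : Function.update lab w (lab u + lab v) w < 0 := by
          rw [Function.update_self]
          rcases hcase with ⟨rfl, rfl⟩ | ⟨rfl, rfl⟩ <;> omega
        rcases hcase with ⟨rfl, rfl⟩ | ⟨rfl, rfl⟩
        · refine Relation.ReflTransGen.head
            ⟨Finset.mem_insert_of_mem ha, hwmem, Or.inr (Or.inl ⟨rfl, rfl⟩),
              by rw [hlab a ha]; exact hna, hwneg⟩ ?_
          exact Relation.ReflTransGen.single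
            ⟨hwmem, Finset.mem_insert_of_mem hb,
              Or.inr (Or.inr (Or.inr (Or.inr ⟨rfl, rfl⟩))), hwneg,
              by rw [hlab b hb]; exact hnb⟩
        · refine Relation.ReflTransGen.head
            ⟨Finset.mem_insert_of_mem ha, hwmem,
              Or.inr (Or.inr (Or.inr (Or.inl ⟨rfl, rfl⟩))),
              by rw [hlab a ha]; exact hna, hwneg⟩ ?_
          exact Relation.ReflTransGen.single
            ⟨hwmem, Finset.mem_insert_of_mem hb,
              Or.inr (Or.inr (Or.inl ⟨rfl, rfl⟩)), hwneg,
              by rw [hlab b hb]; exact hnb⟩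
      · exact Relation.ReflTransGen.single
          ⟨Finset.mem_insert_of_mem ha, Finset.mem_insert_of_mem hb,
            Or.inl ⟨hab, hcase⟩, by rw [hlab a ha]; exact hna, by rw [hlab b hb]; exact hnb⟩
    have glue : ∀ a b, Relation.ReflTransGen
        (fun a b => a ∈ V ∧ b ∈ V ∧ adj a b ∧ lab a < 0 ∧ lab b < 0) a b →
        Relation.ReflTransGen R' a b := by
      intro a b hp
      induction hp with
      | refl => exact Relation.ReflTransGen.refl
      | tail _ h2 ih2 => exact ih2.trans (lift _ _ h2)
    rcases Finset.mem_insert.mp hx with hxw | hxV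
    · rcases Finset.mem_insert.mp hy with hyw | hyV
      · subst hxw; subst hyw; exact Relation.ReflTransGen.refl
      · subst hxw
        have hsum : lab u + lab v < 0 := by rw [Function.update_self] at hxneg; exact hxneg
        have hyneg' : lab y < 0 := by rw [hlab y hyV] at hyneg; exact hyneg
        by_cases hlu : lab u < 0
        · refine Relation.ReflTransGen.head
            ⟨hwmem, Finset.mem_insert_of_mem hu, Or.inr (Or.inr (Or.inl ⟨rfl, rfl⟩)),
              hxneg, by rw [hlab u hu]; exact hlu⟩ ?_
          exact glue u y (ih u y hu hyV hlu hyneg')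
        · have hlv : lab v < 0 := by omega
          refine Relation.ReflTransGen.head
            ⟨hwmem, Finset.mem_insert_of_mem hv,
              Or.inr (Or.inr (Or.inr (Or.inr ⟨rfl, rfl⟩))),
              hxneg, by rw [hlab v hv]; exact hlv⟩ ?_
          exact glue v y (ih v y hv hyV hlv hyneg')
    · have hxneg' : lab x < 0 := by rw [hlab x hxV] at hxneg; exact hxneg
      rcases Finset.mem_insert.mp hy with hyw | hyV
      · subst hyw
        have hsum : lab u + lab v < 0 := by rw [Function.update_self] at hyneg; exact hyneg
        by_cases hlu : lab u < 0
        · refine Relation.ReflTransGen.tail (glue x u (ih x u hxV hu hxneg' hlu)) ?_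
          exact ⟨Finset.mem_insert_of_mem hu, hwmem, Or.inr (Or.inl ⟨rfl, rfl⟩),
            by rw [hlab u hu]; exact hlu, hyneg⟩
        · have hlv : lab v < 0 := by omega
          refine Relation.ReflTransGen.tail (glue x v (ih x v hxV hv hxneg' hlv)) ?_
          exact ⟨Finset.mem_insert_of_mem hv, hwmem,
            Or.inr (Or.inr (Or.inr (Or.inl ⟨rfl, rfl⟩))),
            by rw [hlab v hv]; exact hlv, hyneg⟩
      · have hyneg' : lab y < 0 := by rw [hlab y hyV] at hyneg; exact hyneg
        exact glue x y (ih x y hxV hyV hxneg' hyneg')
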